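/- Let H be a real Hilbert space, let m ≥ 1, and for each i ∈ {1,…,m} let α_i ∈ (0,1), let T_i : H → H be α_i-averaged, and let (e_{i,n})_{n∈ℕ} be a sequence in H. Set α = m·max{α_1,…,α_m}/(1+(m−1)·max{α_1,…,α_m}), let (λ_n)_{n∈ℕ} be a sequence in (0, 1/α), suppose Fix(T_1∘⋯∘T_m) ≠ ∅, suppose Σ_{n∈ℕ} λ_n(1−αλ_n) = +∞ and Σ_{n∈ℕ} λ_n‖e_{i,n}‖ < +∞ for every i, let z_0 ∈ H and define z_{n+1} = z_n + λ_n( T_1(T_2(⋯T_{m−1}(T_m z_n + e_{m,n}) + e_{m−1,n}⋯) + e_{2,n}) + e_{1,n} − z_n ). Then z_{n+1} − z_n converges strongly to 0. -/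

import Mathlib

open Filter Topology
open scoped RealInnerProductSpace

variable {H : Type*} [NormedAddCommGroup H] [InnerProductSpace ℝ H] [CompleteSpace H]

/-- `T` is nonexpansive. -/
def IsNonexpansiveOp (T : H → H) : Prop :=
  ∀ x y, ‖T x - T y‖ ≤ ‖x - y‖

/-- `T` is `α`-averaged: `T = (1 - α) • Id + α • R` for some nonexpansive `R`. -/
def IsAveragedOp (α : ℝ) (T : H → H) : Prop :=
  ∃ R : H → H, IsNonexpansiveOp R ∧ ∀ x, T x = (1 - α) • x + α • R x

/-- `z n` converges weakly to `w`. -/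
def WeakLim (z : ℕ → H) (w : H) : Prop :=
  ∀ y : H, Tendsto (fun n => ⟪z n, y⟫) atTop (nhds ⟪w, y⟫)

/-- `compFrom T i k = T i ∘ T (i+1) ∘ ⋯ ∘ T (i+k-1)`; in particular
`compFrom T 1 m = T 1 ∘ ⋯ ∘ T m` and `compFrom T i 0 = id`. -/
def compFrom (T : ℕ → H → H) : ℕ → ℕ → H → H
  | _, 0 => id
  | i, (k + 1) => T i ∘ compFrom T (i + 1) k

/-- Inexact composition with errors: `inexactFrom T e 1 m z =
T 1 (T 2 (⋯ T (m-1) (T m z + e m) + e (m-1) ⋯) + e 2) + e 1`. -/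
def inexactFrom (T : ℕ → H → H) (e : ℕ → H) : ℕ → ℕ → H → H
  | _, 0 => id
  | i, (k + 1) => fun z => T i (inexactFrom T e (i + 1) k z) + e i


section Aux

lemma norm_combo (t : ℝ) (a b : H) :
    ‖(1-t)•a + t•b‖^2 = (1-t)*‖a‖^2 + t*‖b‖^2 - t*(1-t)*‖a-b‖^2 := by
  have h1 : ∀ v : H, ‖v‖^2 = ⟪v,v⟫ := fun v => (real_inner_self_eq_norm_sq v).symm
  simp only [h1, inner_add_left, inner_add_right, inner_sub_left, inner_sub_right,
    real_inner_smul_left, real_inner_smul_right, real_inner_comm b a]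
  ring

/-- Inequality form of averagedness, with `s = (1-α)/α`. -/
def AvIneq (s : ℝ) (T : H → H) : Prop :=
  ∀ x y, ‖T x - T y‖^2 + s * ‖(x - T x) - (y - T y)‖^2 ≤ ‖x - y‖^2

lemma avIneq_mono {s s' : ℝ} {T : H → H} (h : AvIneq s T) (hle : s' ≤ s) : AvIneq s' T := by
  intro x y
  have := h x y
  nlinarith [sq_nonneg ‖(x - T x) - (y - T y)‖]

lemma isAveraged_avIneq {α : ℝ} {T : H → H} (hα : 0 < α) (hα1 : α < 1)
    (h : IsAveragedOp α T) : AvIneq ((1-α)/α) T := by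
  obtain ⟨R, hR, hTR⟩ := h
  intro x y
  have hd : T x - T y = (1-α)•(x-y) + α•(R x - R y) := by
    rw [hTR x, hTR y]; module
  have hd2 : (x - T x) - (y - T y) = α • ((x-y) - (R x - R y)) := by
    rw [hTR x, hTR y]; module
  have h1 : ‖T x - T y‖^2 = (1-α)*‖x-y‖^2 + α*‖R x - R y‖^2
      - α*(1-α)*‖(x-y)-(R x - R y)‖^2 := by
    rw [hd, norm_combo]
  have h2 : ‖(x - T x) - (y - T y)‖^2 = α^2 * ‖(x-y)-(R x - R y)‖^2 := by
    rw [hd2, norm_smul]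
    simp [abs_of_pos hα]; ring
  have h3 : ‖R x - R y‖ ≤ ‖x - y‖ := hR x y
  have h4 : ‖R x - R y‖^2 ≤ ‖x-y‖^2 := by
    nlinarith [norm_nonneg (R x - R y), norm_nonneg (x-y)]
  rw [h1, h2]
  have : (1-α)/α * (α^2 * ‖(x-y)-(R x - R y)‖^2) = α*(1-α)*‖(x-y)-(R x - R y)‖^2 := by
    field_simp
  rw [this]; nlinarith

lemma avIneq_isAveraged {α : ℝ} {T : H → H} (hα : 0 < α) (hα1 : α < 1)
    (h : AvIneq ((1-α)/α) T) : IsAveragedOp α T := by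
  refine ⟨fun x => x + α⁻¹ • (T x - x), ?_, ?_⟩
  · intro x y
    have hne : α ≠ 0 := ne_of_gt hα
    set u := x - y
    set v := T x - T y
    have hrep : (x + α⁻¹ • (T x - x)) - (y + α⁻¹ • (T y - y))
        = (1 - α⁻¹) • u + α⁻¹ • v := by
      simp only [u, v]
      rw [smul_sub, smul_sub]; module
    have hsq : ‖(x + α⁻¹ • (T x - x)) - (y + α⁻¹ • (T y - y))‖^2
        = (1-α⁻¹)*‖u‖^2 + α⁻¹*‖v‖^2 - α⁻¹*(1-α⁻¹)*‖u-v‖^2 := by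
      rw [hrep, norm_combo]
    have hA := h x y
    have huv : (x - T x) - (y - T y) = u - v := by simp only [u, v]; abel
    rw [huv] at hA
    have hA' : ‖v‖^2 + (1-α)/α * ‖u-v‖^2 ≤ ‖u‖^2 := hA
    have hle : ‖(x + α⁻¹ • (T x - x)) - (y + α⁻¹ • (T y - y))‖^2 ≤ ‖u‖^2 := by
      rw [hsq]
      have e1 : α⁻¹ * (α⁻¹ - 1) = α⁻¹ * ((1-α)/α) := by field_simp
      have hp : (0:ℝ) < α⁻¹ := inv_pos.mpr hα
      nlinarith [mul_le_mul_of_nonneg_left hA' (le_of_lt hp), sq_nonneg ‖u-v‖]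
    nlinarith [norm_nonneg ((x + α⁻¹ • (T x - x)) - (y + α⁻¹ • (T y - y))), norm_nonneg u]
  · intro x
    have hne : α ≠ 0 := ne_of_gt hα
    rw [smul_add, smul_smul, mul_inv_cancel₀ hne]
    module

lemma avIneq_comp {s1 s2 : ℝ} {T1 T2 : H → H} (hs1 : 0 < s1) (hs2 : 0 < s2)
    (h1 : AvIneq s1 T1) (h2 : AvIneq s2 T2) :
    AvIneq (s1*s2/(s1+s2)) (T1 ∘ T2) := by
  intro x y
  have hA := h2 x y
  have hB := h1 (T2 x) (T2 y)
  simp only [Function.comp_apply]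
  set u := x - y
  set v := T2 x - T2 y
  set w := T1 (T2 x) - T1 (T2 y)
  have huw : (x - T1 (T2 x)) - (y - T1 (T2 y)) = (u - v) + (v - w) := by
    simp only [u, v, w]; abel
  have htri : ‖(x - T1 (T2 x)) - (y - T1 (T2 y))‖ ≤ ‖u-v‖ + ‖v-w‖ := by
    rw [huw]; exact norm_add_le _ _
  have hsum : 0 < s1 + s2 := by linarith
  have key : s1*s2/(s1+s2) * ‖(x - T1 (T2 x)) - (y - T1 (T2 y))‖^2
      ≤ s2*‖u-v‖^2 + s1*‖v-w‖^2 := by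
    rw [div_mul_eq_mul_div, div_le_iff₀ hsum]
    have h0 : ‖(x - T1 (T2 x)) - (y - T1 (T2 y))‖^2 ≤ (‖u-v‖ + ‖v-w‖)^2 := by
      nlinarith [norm_nonneg ((x - T1 (T2 x)) - (y - T1 (T2 y))), norm_nonneg (u-v), norm_nonneg (v-w)]
    nlinarith [sq_nonneg (s2*‖u-v‖ - s1*‖v-w‖), mul_pos hs1 hs2]
  have hv : ‖v‖^2 + s2*‖u-v‖^2 ≤ ‖u‖^2 := by
    have huv' : (x - T2 x) - (y - T2 y) = u - v := by simp only [u, v]; abel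
    rw [huv'] at hA; exact hA
  have hw : ‖w‖^2 + s1*‖v-w‖^2 ≤ ‖v‖^2 := by
    have : (T2 x - T1 (T2 x)) - (T2 y - T1 (T2 y)) = v - w := by simp only [v, w]; abel
    rw [this] at hB; exact hB
  linarith

lemma avIneq_compFrom {σ : ℝ} (hσ : 0 < σ) (T : ℕ → H → H) :
    ∀ k : ℕ, 1 ≤ k → ∀ i, (∀ j, i ≤ j → j < i + k → AvIneq σ (T j)) →
      AvIneq (σ / (k:ℝ)) (compFrom T i k) := by
  intro k hk
  induction k, hk using Nat.le_induction with
  | base =>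
    intro i hj
    have h1 : AvIneq σ (T i) := hj i le_rfl (by omega)
    intro x y
    have := h1 x y
    simpa [compFrom] using this
  | succ k hk ih =>
    intro i hj
    have hinner : AvIneq (σ / k) (compFrom T (i+1) k) :=
      ih (i+1) (fun j h1 h2 => hj j (by omega) (by omega))
    have houter : AvIneq σ (T i) := hj i le_rfl (by omega)
    have hcomp := avIneq_comp hσ (by positivity : (0:ℝ) < σ / k) houter hinner
    have heq : σ * (σ / k) / (σ + σ / k) = σ / (k+1) := by
      have hk0 : (k:ℝ) ≠ 0 := by positivity
      field_simp
    rw [heq] at hcomp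
    have : compFrom T i (k+1) = T i ∘ compFrom T (i+1) k := rfl
    rw [this]
    exact_mod_cast hcomp

lemma isAveraged_nonexpansive {α : ℝ} {T : H → H} (h0 : 0 ≤ α) (h1 : α ≤ 1)
    (h : IsAveragedOp α T) : IsNonexpansiveOp T := by
  obtain ⟨R, hR, hTR⟩ := h
  intro x y
  have hd : T x - T y = (1-α)•(x-y) + α•(R x - R y) := by rw [hTR x, hTR y]; module
  calc ‖T x - T y‖ ≤ (1-α)*‖x-y‖ + α*‖R x - R y‖ := by
        rw [hd]
        refine (norm_add_le _ _).trans ?_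
        rw [norm_smul, norm_smul, Real.norm_eq_abs, Real.norm_eq_abs,
          abs_of_nonneg (by linarith), abs_of_nonneg h0]
    _ ≤ (1-α)*‖x-y‖ + α*‖x-y‖ := by
        have := hR x y
        nlinarith
    _ = ‖x-y‖ := by ring

lemma inexact_err (T : ℕ → H → H) (e : ℕ → H) :
    ∀ k i (x : H), (∀ j, i ≤ j → j < i + k → IsNonexpansiveOp (T j)) →
      ‖inexactFrom T e i k x - compFrom T i k x‖ ≤ ∑ j ∈ Finset.Ico i (i+k), ‖e j‖ := by
  intro k
  induction k with
  | zero => intro i x _; simp [inexactFrom, compFrom]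
  | succ k ih =>
    intro i x hj
    have hih := ih (i+1) x (fun j h1 h2 => hj j (by omega) (by omega))
    have hne : IsNonexpansiveOp (T i) := hj i le_rfl (by omega)
    have step : ‖inexactFrom T e i (k+1) x - compFrom T i (k+1) x‖
        ≤ ‖e i‖ + ∑ j ∈ Finset.Ico (i+1) (i+1+k), ‖e j‖ := by
      show ‖(T i (inexactFrom T e (i+1) k x) + e i) - (T i (compFrom T (i+1) k x))‖ ≤ _
      have : (T i (inexactFrom T e (i+1) k x) + e i) - (T i (compFrom T (i+1) k x))
          = (T i (inexactFrom T e (i+1) k x) - T i (compFrom T (i+1) k x)) + e i := by abel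
      rw [this]
      refine (norm_add_le _ _).trans ?_
      have := hne (inexactFrom T e (i+1) k x) (compFrom T (i+1) k x)
      linarith
    refine step.trans ?_
    have : ∑ j ∈ Finset.Ico i (i+(k+1)), ‖e j‖
        = ‖e i‖ + ∑ j ∈ Finset.Ico (i+1) (i+1+k), ‖e j‖ := by
      rw [show i+(k+1) = i+1+k by omega]
      rw [Finset.sum_eq_sum_Ico_succ_bot (by omega)]
    rw [this]

set_option maxHeartbeats 1000000 in
/-- Core convergence result for the inexact Krasnosel'skii–Mann iteration. -/
theorem km_core
    (α : ℝ) (hα0 : 0 < α) (hα1 : α < 1)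
    (R : H → H) (hR : IsNonexpansiveOp R)
    (x : H) (hRx : R x = x)
    (lam : ℕ → ℝ) (hlam : ∀ n, lam n ∈ Set.Ioo (0 : ℝ) (1 / α))
    (hdiv : ¬ Summable (fun n => lam n * (1 - α * lam n)))
    (ε : ℕ → H) (hCsum : Summable (fun n => lam n * ‖ε n‖))
    (z : ℕ → H)
    (hrec : ∀ n, z (n + 1) = z n + (α * lam n) • (R (z n) - z n) + lam n • ε n) :
    Tendsto (fun n => z (n + 1) - z n) atTop (nhds 0) := by

  set A : ℕ → ℝ := fun n => ‖R (z n) - z n‖ with hA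
  set C : ℕ → ℝ := fun n => lam n * ‖ε n‖ with hCdef
  set D : ℕ → ℝ := fun n => ‖z n - x‖ with hD
  set B : ℕ → ℝ := fun n => α * lam n * (1 - α * lam n) with hB
  have hμ0 : ∀ n, 0 < α * lam n := fun n => mul_pos hα0 (hlam n).1
  have hμ1 : ∀ n, α * lam n < 1 := by
    intro n
    have := (hlam n).2
    rw [lt_div_iff₀ hα0] at this
    linarith [this]
  have hC0 : ∀ n, 0 ≤ C n := fun n => mul_nonneg (le_of_lt (hlam n).1) (norm_nonneg _)
  have hA0 : ∀ n, 0 ≤ A n := fun n => norm_nonneg _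
  have hCn : ∀ n, ‖lam n • ε n‖ = C n := by
    intro n; rw [norm_smul, Real.norm_eq_abs, abs_of_pos (hlam n).1]
  -- step bound
  have hstep : ∀ n, ‖z (n+1) - z n‖ ≤ α * lam n * A n + C n := by
    intro n
    have h1 : z (n+1) - z n = (α * lam n) • (R (z n) - z n) + lam n • ε n := by
      rw [hrec n]; abel
    rw [h1]
    refine (norm_add_le _ _).trans ?_
    rw [norm_smul, Real.norm_eq_abs, abs_of_pos (hμ0 n), hCn]
  have hstep' : ∀ n, ‖z (n+1) - z n‖ ≤ A n + C n := by
    intro n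
    refine (hstep n).trans ?_
    have := hμ1 n
    nlinarith [hA0 n, hμ0 n]
  -- Fejér inequalities
  have hRle : ∀ n, ‖R (z n) - x‖ ≤ D n := by
    intro n; have := hR (z n) x; rwa [hRx] at this
  have hBnn : ∀ n, 0 ≤ B n := by
    intro n
    exact mul_nonneg (le_of_lt (hμ0 n)) (by linarith [hμ1 n])
  have hw : ∀ n, ∃ w : H, z (n+1) - x = w + lam n • ε n ∧ ‖w‖ ≤ D n ∧
      ‖w‖^2 ≤ D n^2 - B n * A n^2 := by
    intro n
    set w : H := (1 - α*lam n) • (z n - x) + (α*lam n) • (R (z n) - x) with hwdef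
    have hcombo : ‖w‖^2
        = (1 - α*lam n)*D n^2 + (α*lam n)*‖R (z n) - x‖^2 - (α*lam n)*(1-α*lam n)*A n^2 := by
      rw [hwdef, norm_combo]
      have h2 : (z n - x) - (R (z n) - x) = -(R (z n) - z n) := by abel
      rw [h2, norm_neg]
    have hRl := hRle n
    have hDn : 0 ≤ D n := norm_nonneg _
    have h3 : ‖R (z n) - x‖^2 ≤ D n^2 := by nlinarith [norm_nonneg (R (z n) - x)]
    have hμa := hμ0 n; have hμb := hμ1 n
    have hsq : ‖w‖^2 ≤ D n^2 - B n * A n^2 := by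
      rw [hcombo]
      show _ ≤ D n^2 - α * lam n * (1 - α * lam n) * A n^2
      nlinarith [sq_nonneg (A n)]
    have hwle : ‖w‖ ≤ D n := by
      nlinarith [norm_nonneg w, mul_nonneg (hBnn n) (sq_nonneg (A n))]
    exact ⟨w, by rw [hrec n]; module, hwle, hsq⟩
  have hDrec : ∀ n, D (n+1) ≤ D n + C n := by
    intro n
    obtain ⟨w, hw1, hw2, _⟩ := hw n
    calc D (n+1) = ‖w + lam n • ε n‖ := by rw [hD]; simp only; rw [hw1]
    _ ≤ ‖w‖ + C n := by refine (norm_add_le _ _).trans ?_; rw [hCn]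
    _ ≤ D n + C n := by linarith
  have hD2 : ∀ n, D (n+1)^2 ≤ D n^2 - B n * A n^2 + C n * (2*D n + C n) := by
    intro n
    obtain ⟨w, hw1, hw2, hw3⟩ := hw n
    have h1 : D (n+1) ≤ ‖w‖ + C n := by
      calc D (n+1) = ‖w + lam n • ε n‖ := by rw [hD]; simp only; rw [hw1]
      _ ≤ ‖w‖ + C n := by refine (norm_add_le _ _).trans ?_; rw [hCn]
    have hDn1 : 0 ≤ D (n+1) := norm_nonneg _
    have hwn : 0 ≤ ‖w‖ := norm_nonneg _
    nlinarith [hC0 n]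
  -- boundedness
  have hCt0 : 0 ≤ ∑' n, C n := tsum_nonneg hC0
  have hCle : ∀ n, C n ≤ ∑' k, C k := fun n => Summable.le_tsum hCsum n (fun _ _ => hC0 _)
  have hpart : ∀ n, ∑ k ∈ Finset.range n, C k ≤ ∑' k, C k := by
    intro n
    exact Summable.sum_le_tsum (Finset.range n) (fun _ _ => hC0 _) hCsum
  set Bd : ℝ := D 0 + ∑' k, C k with hBd
  have hDbd : ∀ n, D n ≤ Bd := by
    have h1 : ∀ n, D n ≤ D 0 + ∑ k ∈ Finset.range n, C k := by
      intro n
      induction n with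
      | zero => simp
      | succ n ih =>
        rw [Finset.sum_range_succ]
        have := hDrec n
        linarith
    intro n
    exact (h1 n).trans (by linarith [hpart n])
  -- summability of B*A^2
  set K : ℝ := 2*Bd + ∑' k, C k with hK
  have hBA : Summable (fun n => B n * A n^2) := by
    apply summable_of_sum_range_le (c := D 0^2 + K * ∑' k, C k)
    · intro n; exact mul_nonneg (hBnn n) (sq_nonneg _)
    · intro N
      have hterm : ∀ n, B n * A n^2 ≤ (D n^2 - D (n+1)^2) + K * C n := by
        intro n
        have h2 := hD2 n
        have h4 := hDbd n
        have h5 := hCle n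
        have h6 := hC0 n
        have : C n * (2*D n + C n) ≤ K * C n := by
          rw [hK]; nlinarith
        linarith
      calc ∑ n ∈ Finset.range N, B n * A n^2
          ≤ ∑ n ∈ Finset.range N, ((D n^2 - D (n+1)^2) + K * C n) :=
            Finset.sum_le_sum (fun n _ => hterm n)
        _ = (D 0^2 - D N^2) + K * ∑ n ∈ Finset.range N, C n := by
            rw [Finset.sum_add_distrib, Finset.sum_range_sub' (fun n => D n^2), ← Finset.mul_sum]
        _ ≤ D 0^2 + K * ∑' k, C k := by
            have hDN : 0 ≤ D N^2 := sq_nonneg _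
            have hKnn : 0 ≤ K := by
              rw [hK]
              have : 0 ≤ Bd := le_trans (norm_nonneg _) (hDbd 0)
              linarith
            have := hpart N
            nlinarith
  -- B is not summable
  have hBdiv : ¬ Summable B := by
    intro hs
    apply hdiv
    have := hs.mul_left α⁻¹
    have heq : (fun n => α⁻¹ * B n) = fun n => lam n * (1 - α * lam n) := by
      funext n
      rw [hB]
      field_simp
    rwa [heq] at this
  -- liminf A = 0
  have hliminf : ∀ δ : ℝ, 0 < δ → ∀ N : ℕ, ∃ n, N ≤ n ∧ A n < δ := by
    intro δ hδ N
    by_contra hcon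
    push_neg at hcon
    apply hBdiv
    rw [← summable_nat_add_iff N]
    have h1 : Summable (fun n => B (n + N) * A (n + N)^2) :=
      (summable_nat_add_iff N).mpr hBA
    refine Summable.of_nonneg_of_le (fun n => hBnn _) (fun n => ?_) (h1.mul_left (δ^2)⁻¹)
    have hge := hcon (n + N) (by omega)
    have : B (n+N) * δ^2 ≤ B (n+N) * A (n+N)^2 := by
      have : δ^2 ≤ A (n+N)^2 := by nlinarith
      exact mul_le_mul_of_nonneg_left this (hBnn _)
    rw [inv_mul_eq_div, le_div_iff₀ (by positivity)]
    linarith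
  -- almost monotonicity of A
  have hA2 : ∀ n, A (n+1) ≤ A n + 2 * C n := by
    intro n
    have h1 : ‖R (z (n+1)) - R (z n)‖ ≤ ‖z (n+1) - z n‖ := hR _ _
    have h2 : R (z n) - z (n+1) = (1 - α*lam n) • (R (z n) - z n) - lam n • ε n := by
      rw [hrec n]; module
    have h3 : ‖R (z n) - z (n+1)‖ ≤ (1 - α*lam n) * A n + C n := by
      rw [h2]
      refine (norm_sub_le _ _).trans ?_
      rw [norm_smul, Real.norm_eq_abs, abs_of_nonneg (by linarith [hμ1 n]), hCn]
    have h4 : A (n+1) ≤ ‖R (z (n+1)) - R (z n)‖ + ‖R (z n) - z (n+1)‖ := by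
      have : R (z (n+1)) - z (n+1) = (R (z (n+1)) - R (z n)) + (R (z n) - z (n+1)) := by abel
      rw [hA]; simp only; rw [this]; exact norm_add_le _ _
    have h5 := hstep n
    have := hμ0 n
    nlinarith [hA0 n]
  -- A tends to 0
  have hAtend : Tendsto A atTop (nhds 0) := by
    rw [Metric.tendsto_atTop]
    intro ε' hε'
    have hC2 : Summable (fun n => 2 * C n) := hCsum.mul_left 2
    have hcauchy : CauchySeq (fun n => ∑ k ∈ Finset.range n, 2 * C k) :=
      hC2.hasSum.tendsto_sum_nat.cauchySeq
    rw [Metric.cauchySeq_iff'] at hcauchy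
    obtain ⟨N1, hN1⟩ := hcauchy (ε'/2) (by linarith)
    obtain ⟨N, hNN1, hAN⟩ := hliminf (ε'/2) (by linarith) N1
    refine ⟨N, fun n hn => ?_⟩
    have hmono : ∀ p, N ≤ p → A p ≤ A N + ∑ k ∈ Finset.Ico N p, 2 * C k := by
      intro p hp
      induction p, hp using Nat.le_induction with
      | base => simp
      | succ p hp ih =>
        rw [Finset.sum_Ico_succ_top hp]
        have := hA2 p
        linarith
    have htail : ∑ k ∈ Finset.Ico N n, 2 * C k < ε'/2 := by
      have hsub : Finset.Ico N n ⊆ Finset.Ico N1 n := by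
        apply Finset.Ico_subset_Ico (by omega) le_rfl
      have hle : ∑ k ∈ Finset.Ico N n, 2 * C k ≤ ∑ k ∈ Finset.Ico N1 n, 2 * C k :=
        Finset.sum_le_sum_of_subset_of_nonneg hsub (fun k _ _ => by linarith [hC0 k])
      have heq : ∑ k ∈ Finset.Ico N1 n, 2 * C k
          = (∑ k ∈ Finset.range n, 2 * C k) - (∑ k ∈ Finset.range N1, 2 * C k) := by
        rw [← Finset.sum_Ico_eq_sub _ (by omega)]
      have hd := hN1 n (by omega)
      rw [Real.dist_eq] at hd
      have := abs_lt.mp hd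
      linarith [this.2, hle, heq.le, heq.ge]
    have := hmono n hn
    rw [Real.dist_eq, abs_of_nonneg (by linarith [hA0 n] : (0:ℝ) ≤ A n - 0)]
    simp only [sub_zero]
    linarith
  -- conclude
  have hCtend : Tendsto C atTop (nhds 0) := hCsum.tendsto_atTop_zero
  rw [tendsto_zero_iff_norm_tendsto_zero]
  apply squeeze_zero (fun n => norm_nonneg _) hstep'
  have : (0:ℝ) = 0 + 0 := by ring
  rw [this]
  exact hAtend.add hCtend

end Aux

theorem statement3
    (m : ℕ) (hm : 1 ≤ m)
    (αi : ℕ → ℝ) (T : ℕ → H → H) (e : ℕ → ℕ → H)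
    (hαi : ∀ i ∈ Finset.Icc 1 m, αi i ∈ Set.Ioo (0 : ℝ) 1)
    (hT : ∀ i ∈ Finset.Icc 1 m, IsAveragedOp (αi i) (T i))
    (M α : ℝ)
    (hM1 : ∀ i ∈ Finset.Icc 1 m, αi i ≤ M)
    (hM2 : ∃ i ∈ Finset.Icc 1 m, αi i = M)
    (hα : α = (m : ℝ) * M / (1 + ((m : ℝ) - 1) * M))
    (lam : ℕ → ℝ) (hlam : ∀ n, lam n ∈ Set.Ioo (0 : ℝ) (1 / α))
    (hfix : ∃ x : H, compFrom T 1 m x = x)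
    (hdiv : ¬ Summable (fun n => lam n * (1 - α * lam n)))
    (herr : ∀ i ∈ Finset.Icc 1 m, Summable (fun n => lam n * ‖e i n‖))
    (z : ℕ → H)
    (hz : ∀ n, z (n + 1) = z n + lam n • (inexactFrom T (fun i => e i n) 1 m (z n) - z n)) :
    Tendsto (fun n => z (n + 1) - z n) atTop (nhds 0) := by
  have hm' : (1:ℝ) ≤ (m:ℝ) := by exact_mod_cast hm
  obtain ⟨i0, hi0, hi0M⟩ := hM2
  have hM0 : 0 < M := hi0M ▸ (hαi i0 hi0).1
  have hMlt : M < 1 := hi0M ▸ (hαi i0 hi0).2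
  have hden : 0 < 1 + ((m:ℝ)-1)*M := by nlinarith
  have hmpos : 0 < (m:ℝ) := by linarith
  have hα0 : 0 < α := by
    rw [hα]; exact div_pos (by positivity) hden
  have hα1 : α < 1 := by
    rw [hα, div_lt_one hden]; nlinarith
  set σ : ℝ := (1-M)/M with hσdef
  have hσ : 0 < σ := div_pos (by linarith) hM0
  have hTs : ∀ j, 1 ≤ j → j < 1 + m → AvIneq σ (T j) := by
    intro j h1 h2
    have hjm : j ∈ Finset.Icc 1 m := Finset.mem_Icc.mpr ⟨h1, by omega⟩
    have ha := hαi j hjm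
    have h := isAveraged_avIneq ha.1 ha.2 (hT j hjm)
    refine avIneq_mono h ?_
    rw [hσdef, div_le_div_iff₀ hM0 ha.1]
    nlinarith [hM1 j hjm]
  have hScomp : AvIneq (σ/(m:ℝ)) (compFrom T 1 m) := avIneq_compFrom hσ T m hm 1 hTs
  have hseq : σ/(m:ℝ) = (1-α)/α := by
    rw [hσdef, hα]
    rw [div_div]
    rw [div_eq_div_iff (by positivity) (by positivity)]
    have hden' : (1 - M + M * (m:ℝ)) ≠ 0 := (by nlinarith : (0:ℝ) < 1 - M + M * m).ne'
    have hden'' : (1 + ((m:ℝ) - 1) * M) ≠ 0 := hden.ne'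
    field_simp
    ring_nf
    field_simp
    ring
  have hSav : IsAveragedOp α (compFrom T 1 m) := avIneq_isAveraged hα0 hα1 (hseq ▸ hScomp)
  obtain ⟨R, hRne, hSR⟩ := hSav
  obtain ⟨x, hxfix⟩ := hfix
  have hRx : R x = x := by
    have h1 : (1-α)•x + α•R x = x := by rw [← hSR x, hxfix]
    have h2 : α • R x = α • x := by
      have h3 : α • R x = x - (1-α) • x := by
        conv_lhs => rw [show α • R x = (1-α)•x + α•R x - (1-α)•x by abel]
        rw [h1]
      rw [h3]; module
    exact smul_right_injective H (ne_of_gt hα0) h2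
  set ε : ℕ → H := fun n => inexactFrom T (fun i => e i n) 1 m (z n) - compFrom T 1 m (z n)
    with hεdef
  have hTnonexp : ∀ j, 1 ≤ j → j < 1 + m → IsNonexpansiveOp (T j) := by
    intro j h1 h2
    have hjm : j ∈ Finset.Icc 1 m := Finset.mem_Icc.mpr ⟨h1, by omega⟩
    have ha := hαi j hjm
    exact isAveraged_nonexpansive ha.1.le ha.2.le (hT j hjm)
  have hεb : ∀ n, ‖ε n‖ ≤ ∑ i ∈ Finset.Icc 1 m, ‖e i n‖ := by
    intro n
    have h := inexact_err T (fun i => e i n) m 1 (z n) hTnonexp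
    have hIcc : Finset.Ico 1 (1+m) = Finset.Icc 1 m := by
      rw [Nat.add_comm, Finset.Ico_add_one_right_eq_Icc]
    rw [hIcc] at h
    exact h
  have hCsum : Summable (fun n => lam n * ‖ε n‖) := by
    have hg : Summable (fun n => ∑ i ∈ Finset.Icc 1 m, lam n * ‖e i n‖) :=
      summable_sum (fun i hi => herr i hi)
    refine Summable.of_nonneg_of_le
      (fun n => mul_nonneg (hlam n).1.le (norm_nonneg _)) (fun n => ?_) hg
    calc lam n * ‖ε n‖ ≤ lam n * ∑ i ∈ Finset.Icc 1 m, ‖e i n‖ :=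
          mul_le_mul_of_nonneg_left (hεb n) (hlam n).1.le
      _ = ∑ i ∈ Finset.Icc 1 m, lam n * ‖e i n‖ := Finset.mul_sum _ _ _
  have hrec : ∀ n, z (n + 1) = z n + (α * lam n) • (R (z n) - z n) + lam n • ε n := by
    intro n
    rw [hz n]
    have h1 : inexactFrom T (fun i => e i n) 1 m (z n) = compFrom T 1 m (z n) + ε n := by
      simp only [hεdef]; abel
    rw [h1, hSR (z n)]
    module
  exact km_core α hα0 hα1 R hRne x hRx lam hlam hdiv ε hCsum z hrec
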